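/- Let f : 2^[d] → ℕ be a monotone submodular function with f(∅) = 0, and let P_f = { q ∈ ℝ_{≥0}^d : ∑_{j∈J} q_j ≤ f(J) for all J ⊆ [d] } be the associated polymatroid. Then the set of monomials { x^q : q ∈ P_f ∩ ℕ^d } is a pure order ideal of monomials: it is closed under divisibility, and all its maximal elements under divisibility have the same total degree f([d]). -/

import Mathlib

open Finset MvPolynomial
attribute [local instance] Classical.propDecidable

variable {S : Type*} [Fintype S] [DecidableEq S]

/-- `T` is a partial transversal of the set system `A = (A j : j ∈ [d])`:
its elements can be matched injectively to distinct members of `A` containing them. -/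
def IsPT {d : ℕ} (A : Fin d → Finset S) (T : Finset S) : Prop :=
  ∃ f : S → Fin d, Set.InjOn f ↑T ∧ ∀ s ∈ T, s ∈ A (f s)

/-- Rank function of the transversal matroid `M(A)`:
the maximum size of a partial transversal contained in `T`. -/
noncomputable def tRk {d : ℕ} (A : Fin d → Finset S) (T : Finset S) : ℕ :=
  (T.powerset.filter (IsPT A)).sup Finset.card

/-- Rank function of the dual matroid `M(A)*`: `rk*(T) = rk(S∖T) + |T| − rk(S)`. -/
noncomputable def dualRk {d : ℕ} (A : Fin d → Finset S) (T : Finset S) : ℕ :=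
  tRk A Tᶜ + T.card - tRk A (univ : Finset S)

/-- Lattice points of the parking polymatroid `P(A)`. -/
def inP {d : ℕ} (A : Fin d → Finset S) (q : Fin d →₀ ℕ) : Prop :=
  ∀ J : Finset (Fin d), ∑ j ∈ J, q j ≤ dualRk A (J.biUnion A)

/-- Rank function of the matroid of a vector configuration:
the columns `v_s` of the matrix `V`. -/
noncomputable def vRk {k : Type*} [Field k] {d : ℕ} (V : Matrix (Fin d) S k) (T : Finset S) : ℕ :=
  Module.finrank k (Submodule.span k ((fun s j => V j s) '' (T : Set S)))

/-- The power ideal `I(V)`, generated by `ℓ_H ^ ρ_H` over all hyperplanes `H` of `V`: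
a hyperplane is cut out by a nonzero linear form `ℓ` such that the vectors it kills span a
rank-`(d−1)` subspace, and `ρ_H` is the number of vectors of `V` outside `H`. -/
noncomputable def powerIdeal {k : Type*} [Field k] {d : ℕ} (V : Matrix (Fin d) S k) :
    Ideal (MvPolynomial (Fin d) k) :=
  Ideal.span { p | ∃ ℓ : Fin d → k, ℓ ≠ 0 ∧
    vRk V ((univ : Finset S).filter fun s => ∑ j, ℓ j * V j s = 0) = d - 1 ∧
    p = (∑ j, C (ℓ j) * X j) ^ (((univ : Finset S).filter fun s => ¬ (∑ j, ℓ j * V j s = 0)).card) }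

/-- For a monotone submodular `f` with `f ∅ = 0`, the lattice points of the polymatroid `P_f`
form a pure order ideal of monomials: they are closed downwards under divisibility, and every
maximal one has total degree `f([d])`. -/
theorem stmt9 {d : ℕ} (f : Finset (Fin d) → ℕ) (h0 : f ∅ = 0)
    (hmono : ∀ I J : Finset (Fin d), I ⊆ J → f I ≤ f J)
    (hsub : ∀ I J : Finset (Fin d), f (I ∩ J) + f (I ∪ J) ≤ f I + f J) :
    (∀ q q' : Fin d → ℕ, (∀ j, q' j ≤ q j) →
        (∀ J : Finset (Fin d), ∑ j ∈ J, q j ≤ f J) →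
        (∀ J : Finset (Fin d), ∑ j ∈ J, q' j ≤ f J)) ∧
      (∀ q : Fin d → ℕ, (∀ J : Finset (Fin d), ∑ j ∈ J, q j ≤ f J) →
        (∀ q' : Fin d → ℕ, (∀ J : Finset (Fin d), ∑ j ∈ J, q' j ≤ f J) →
          (∀ j, q j ≤ q' j) → q' = q) →
        ∑ j, q j = f (univ : Finset (Fin d))) := by
  constructor
  · intro q q' hle hq J
    exact le_trans (Finset.sum_le_sum fun j _ => hle j) (hq J)
  · intro q hq hmax
    have key : ∀ j : Fin d, ∃ J : Finset (Fin d), j ∈ J ∧ ∑ i ∈ J, q i = f J := by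
      intro j
      by_contra hcon
      push_neg at hcon
      have heq : (fun i => if i = j then q i + 1 else q i) = q := by
        apply hmax
        · intro J
          by_cases hj : j ∈ J
          · have h1 := hcon J hj
            have h2 := hq J
            have h3 : ∑ i ∈ J, (if i = j then q i + 1 else q i)
                = ∑ i ∈ J, q i + ∑ i ∈ J, (if i = j then 1 else 0) := by
              rw [← Finset.sum_add_distrib]
              apply Finset.sum_congr rfl
              intro i _
              split <;> omega
            rw [h3, Finset.sum_ite_eq' J j (fun _ => 1), if_pos hj]
            omega
          · have : ∑ i ∈ J, (if i = j then q i + 1 else q i) = ∑ i ∈ J, q i := by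
              apply Finset.sum_congr rfl
              intro i hi
              have : i ≠ j := fun h => hj (h ▸ hi)
              simp [this]
            rw [this]; exact hq J
        · intro i; split <;> omega
      have := congrFun heq j
      simp at this
    choose J hJmem hJtight using key
    have tun : ∀ A B : Finset (Fin d), (∑ i ∈ A, q i = f A) → (∑ i ∈ B, q i = f B) →
        ∑ i ∈ A ∪ B, q i = f (A ∪ B) := by
      intro A B hA hB
      have h1 := hsub A B
      have h2 := hq (A ∩ B)
      have h3 := hq (A ∪ B)
      have h4 : ∑ i ∈ A ∪ B, q i + ∑ i ∈ A ∩ B, q i = ∑ i ∈ A, q i + ∑ i ∈ B, q i :=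
        Finset.sum_union_inter
      omega
    have hind : ∀ s : Finset (Fin d), ∑ i ∈ s.biUnion J, q i = f (s.biUnion J) := by
      intro s
      induction s using Finset.induction_on with
      | empty => simp [h0]
      | insert _ _ ha ih =>
        rw [Finset.biUnion_insert]
        exact tun _ _ (hJtight _) ih
    have huniv : (univ : Finset (Fin d)).biUnion J = univ := by
      apply Finset.eq_univ_of_forall
      intro j
      exact Finset.mem_biUnion.mpr ⟨j, Finset.mem_univ j, hJmem j⟩
    have := hind univ
    rw [huniv] at this
    exact this
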